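/- arXiv:1305.4888 — 4 statements merged into one kernel-verified Lean document; each statement's English description precedes it below -/
import Mathlib

section
/- Let ω ⊆ ℝ² be a bounded open set, M > 0 and 0 < α < 1. Let q̃ : ℝ² × ℝ → ℝ be continuous with |q̃(z)| ≤ 2M for all z ∈ cl(ω) × ℝ and |q̃(z) − q̃(w)| ≤ 2M·‖z − w‖^α for all z, w ∈ cl(ω) × ℝ, and let q : ℝ² × ℝ → ℝ be equal to q̃ on cl(ω) × ℝ and equal to 0 outside cl(ω) × ℝ. Assume there is a constant C_ω > 0 such that the 2-dimensional Lebesgue measure of {x' ∈ ℝ² : dist(x', ∂ω) ≤ s} is at most C_ω·s for every s ∈ (0,1]. Then there exists a constant C > 0, depending only on ω, M, α, C_ω, φ and h, such that for every δ ∈ (0,1) and every y₃ ∈ ℝ one has (∫_{ℝ²} |R_δ[q](y',y₃) − q(y',y₃)|² dy')^{1/2} ≤ C·δ^{min(α,1/2)}. -/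
open MeasureTheory Metric Set
noncomputable def Phid (φ : EuclideanSpace ℝ (Fin 2) → ℝ) (δ : ℝ)
    (x' y' : EuclideanSpace ℝ (Fin 2)) : ℝ := δ⁻¹ * φ (δ⁻¹ • (x' - y'))

noncomputable def hdel (h : ℝ → ℝ) (δ x3 y3 : ℝ) : ℝ :=
  δ ^ (-(1 / 2) : ℝ) * h ((x3 - y3) / δ)

noncomputable def Rdel (φ : EuclideanSpace ℝ (Fin 2) → ℝ) (h : ℝ → ℝ)
    (q : EuclideanSpace ℝ (Fin 2) → ℝ → ℝ) (δ : ℝ)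
    (y' : EuclideanSpace ℝ (Fin 2)) (y3 : ℝ) : ℝ :=
  ∫ x3 : ℝ, ∫ x' : EuclideanSpace ℝ (Fin 2),
    (Phid φ δ x' y') ^ 2 * (hdel h δ x3 y3) ^ 2 * q x' x3

lemma aux_inter_frontier {X : Type*} [TopologicalSpace X] {t s : Set X}
    (ht : IsPreconnected t) (h1 : (t ∩ s).Nonempty) (h2 : (t \ s).Nonempty) :
    (t ∩ frontier s).Nonempty := by
  by_contra hc
  rw [Set.not_nonempty_iff_eq_empty] at hc
  have hsub : t ⊆ interior s ∪ (closure s)ᶜ := by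
    intro x hx
    by_cases hxc : x ∈ closure s
    · left
      by_contra hxi
      exact (Set.eq_empty_iff_forall_notMem.1 hc x) ⟨hx, hxc, hxi⟩
    · right; exact hxc
  have h1' : (t ∩ interior s).Nonempty := by
    obtain ⟨a, hat, has⟩ := h1
    rcases hsub hat with hi | hco
    · exact ⟨a, hat, hi⟩
    · exact absurd (subset_closure has) hco
  have h2' : (t ∩ (closure s)ᶜ).Nonempty := by
    obtain ⟨b, hbt, hbs⟩ := h2
    rcases hsub hbt with hi | hco
    · exact absurd (interior_subset hi) hbs
    · exact ⟨b, hbt, hco⟩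
  obtain ⟨x, _, hxi, hxc⟩ :=
    ht _ _ isOpen_interior isClosed_closure.isOpen_compl hsub h1' h2'
  exact hxc (subset_closure (interior_subset hxi))

lemma aux_frontier_dist {E : Type*} [NormedAddCommGroup E] [NormedSpace ℝ E]
    {s : Set E} {x y : E} (hx : x ∈ s) (hy : y ∉ s) :
    ∃ z ∈ frontier s, dist x z ≤ dist x y := by
  obtain ⟨z, hzseg, hzf⟩ := aux_inter_frontier (convex_segment x y).isPreconnected
      ⟨x, left_mem_segment ℝ x y, hx⟩ ⟨y, right_mem_segment ℝ x y, hy⟩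
  refine ⟨z, hzf, ?_⟩
  have := dist_add_dist_of_mem_segment hzseg
  have h0 := dist_nonneg (x := z) (y := y)
  linarith

lemma key_est (φ : EuclideanSpace ℝ (Fin 2) → ℝ) (h : ℝ → ℝ)
    (q : EuclideanSpace ℝ (Fin 2) → ℝ → ℝ) (δ : ℝ) (y' : EuclideanSpace ℝ (Fin 2))
    (y3 M B : ℝ)
    (hφ_cont : Continuous φ)
    (hφ_supp : Function.support φ ⊆ Metric.closedBall 0 1)
    (hφ_int : ∫ x : EuclideanSpace ℝ (Fin 2), (φ x) ^ 2 = 1)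
    (hh_cont : Continuous h)
    (hh_supp : Function.support h ⊆ Set.Icc (-1 : ℝ) 1)
    (hh_int : ∫ x : ℝ, (h x) ^ 2 = 1)
    (hδ0 : 0 < δ)
    (hqm : Measurable (fun p : EuclideanSpace ℝ (Fin 2) × ℝ => q p.1 p.2))
    (hqb : ∀ x' x3, |q x' x3| ≤ 2 * M)
    (hB : 0 ≤ B)
    (hqd : ∀ x' x3, dist x' y' ≤ δ → |x3 - y3| ≤ δ → |q x' x3 - q y' y3| ≤ B) :
    |Rdel φ h q δ y' y3 - q y' y3| ≤ B := by
  have hM2 : (0:ℝ) ≤ 2 * M := le_trans (abs_nonneg _) (hqb y' y3)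
  set P : EuclideanSpace ℝ (Fin 2) → ℝ := fun x' => (Phid φ δ x' y') ^ 2 with hPdef
  set H : ℝ → ℝ := fun x3 => (hdel h δ x3 y3) ^ 2 with hHdef
  have hPnn : ∀ x', 0 ≤ P x' := fun x' => sq_nonneg _
  have hHnn : ∀ x3, 0 ≤ H x3 := fun x3 => sq_nonneg _
  have hPcont : Continuous P := by
    apply Continuous.pow
    exact continuous_const.mul
      (hφ_cont.comp (((continuous_id.sub continuous_const).const_smul δ⁻¹)))
  have hHcont : Continuous H := by
    apply Continuous.pow
    exact continuous_const.mul (hh_cont.comp ((continuous_id.sub continuous_const).div_const δ))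
  have hPsupp : ∀ x', δ < dist x' y' → P x' = 0 := by
    intro x' hx
    have : φ (δ⁻¹ • (x' - y')) = 0 := by
      by_contra h0
      have := hφ_supp (Function.mem_support.2 h0)
      rw [Metric.mem_closedBall, dist_zero_right, norm_smul, norm_inv,
        Real.norm_eq_abs, abs_of_pos hδ0, ← dist_eq_norm] at this
      have := (inv_mul_le_iff₀ hδ0).1 this
      rw [mul_one] at this
      linarith
    simp [hPdef, Phid, this]
  have hHsupp : ∀ x3, δ < |x3 - y3| → H x3 = 0 := by
    intro x3 hx
    have : h ((x3 - y3) / δ) = 0 := by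
      by_contra h0
      have := hh_supp (Function.mem_support.2 h0)
      rw [Set.mem_Icc, ← abs_le, abs_div, abs_of_pos hδ0, div_le_one hδ0] at this
      linarith
    simp [hHdef, hdel, this]
  have hPint : Integrable P := by
    refine hPcont.integrable_of_hasCompactSupport ?_
    refine HasCompactSupport.intro (isCompact_closedBall y' δ) (fun x hx => ?_)
    exact hPsupp x (by simpa [Metric.mem_closedBall] using hx)
  have hHint : Integrable H := by
    refine hHcont.integrable_of_hasCompactSupport ?_
    refine HasCompactSupport.intro (isCompact_closedBall y3 δ) (fun x hx => ?_)
    refine hHsupp x ?_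
    rw [Metric.mem_closedBall, Real.dist_eq, not_le] at hx
    exact hx
  have hPone : ∫ x', P x' = 1 := by
    have e1 : P = fun x' => (fun u => δ⁻¹ ^ 2 * (φ (δ⁻¹ • u)) ^ 2) (x' - y') := by
      funext x'; simp [hPdef, Phid, mul_pow]
    rw [e1, integral_sub_right_eq_self (fun u => δ⁻¹ ^ 2 * (φ (δ⁻¹ • u)) ^ 2) y',
      integral_const_mul, Measure.integral_comp_inv_smul volume (fun v => (φ v) ^ 2) δ,
      hφ_int, finrank_euclideanSpace_fin, smul_eq_mul, mul_one,
      abs_of_nonneg (by positivity : (0:ℝ) ≤ δ ^ 2)]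
    field_simp
  have hHone : ∫ x3, H x3 = 1 := by
    have hsq : (δ ^ (-(1 / 2) : ℝ)) ^ 2 = δ⁻¹ := by
      rw [← Real.rpow_natCast (δ ^ (-(1 / 2) : ℝ)) 2, ← Real.rpow_mul hδ0.le]
      norm_num
      exact Real.rpow_neg_one δ
    have e1 : H = fun x3 => (fun u => δ⁻¹ * (fun v => (h v) ^ 2) (u / δ)) (x3 - y3) := by
      funext x3; simp only [hHdef, hdel, mul_pow]; rw [hsq]
    rw [e1, integral_sub_right_eq_self (fun u => δ⁻¹ * (fun v => (h v) ^ 2) (u / δ)) y3,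
      integral_const_mul, Measure.integral_comp_div (fun v => (h v) ^ 2) δ,
      hh_int, smul_eq_mul, mul_one, abs_of_pos hδ0]
    field_simp
  have hqm3 : ∀ x3 : ℝ, AEStronglyMeasurable (fun x' => q x' x3) volume := by
    intro x3
    exact (hqm.comp (measurable_id.prodMk measurable_const)).aestronglyMeasurable
  have hI0 : ∀ x3, Integrable (fun x' => P x' * q x' x3) := by
    intro x3
    have hb : ∃ C, ∀ x', ‖q x' x3‖ ≤ C := ⟨2 * M, fun x' => by
      rw [Real.norm_eq_abs]; exact hqb x' x3⟩
    exact (hPint.bdd_mul (hqm3 x3) (ae_of_all _ fun x' => by rw [Real.norm_eq_abs]; exact hqb x' x3)).congr (ae_of_all _ fun x' => mul_comm _ _)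
  have hI1 : ∀ x3, Integrable (fun x' => P x' * H x3 * q x' x3) := by
    intro x3
    exact ((hI0 x3).const_mul (H x3)).congr (ae_of_all _ fun x' => by ring)
  have hEq : ∀ x3, (∫ x', P x' * H x3 * q x' x3) = H x3 * ∫ x', P x' * q x' x3 := by
    intro x3
    rw [← integral_const_mul]
    congr 1; funext x'; ring
  have hJb : ∀ x3, |∫ x', P x' * q x' x3| ≤ 2 * M := by
    intro x3
    rw [← Real.norm_eq_abs]
    refine le_trans (norm_integral_le_integral_norm _) ?_
    have hle : ∫ x', ‖P x' * q x' x3‖ ≤ ∫ x', P x' * (2 * M) := by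
      refine integral_mono_of_nonneg (ae_of_all _ fun _ => norm_nonneg _)
        (hPint.mul_const _) (ae_of_all _ fun x' => ?_)
      show ‖P x' * q x' x3‖ ≤ P x' * (2 * M)
      rw [Real.norm_eq_abs, abs_mul, abs_of_nonneg (hPnn x')]
      exact mul_le_mul_of_nonneg_left (hqb x' x3) (hPnn x')
    rw [integral_mul_const, hPone, one_mul] at hle
    exact hle
  have hinner_int : Integrable (fun x3 => ∫ x', P x' * H x3 * q x' x3) := by
    have hJsm : StronglyMeasurable (fun x3 : ℝ => ∫ x', P x' * q x' x3) := by
      have hun : StronglyMeasurable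
          (Function.uncurry fun (x3 : ℝ) (x' : EuclideanSpace ℝ (Fin 2)) => P x' * q x' x3) := by
        apply Measurable.stronglyMeasurable
        exact (hPcont.measurable.comp measurable_snd).mul
          (hqm.comp (measurable_snd.prodMk measurable_fst))
      exact hun.integral_prod_right
    have hmeas : AEStronglyMeasurable (fun x3 => ∫ x', P x' * H x3 * q x' x3) volume := by
      have : (fun x3 => ∫ x', P x' * H x3 * q x' x3)
          = fun x3 => H x3 * ∫ x', P x' * q x' x3 := funext hEq
      rw [this]
      exact (hHcont.stronglyMeasurable.mul hJsm).aestronglyMeasurable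
    refine Integrable.mono' (hHint.const_mul (2 * M)) hmeas (ae_of_all _ fun x3 => ?_)
    rw [hEq x3, Real.norm_eq_abs, abs_mul, abs_of_nonneg (hHnn x3)]
    calc H x3 * |∫ x', P x' * q x' x3| ≤ H x3 * (2 * M) :=
          mul_le_mul_of_nonneg_left (hJb x3) (hHnn x3)
      _ = 2 * M * H x3 := by ring
  have hHc_int : Integrable (fun x3 => H x3 * q y' y3) := hHint.mul_const _
  have step1 : Rdel φ h q δ y' y3 - q y' y3
      = ∫ x3, ((∫ x', P x' * H x3 * q x' x3) - H x3 * q y' y3) := by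
    have e1 : ∫ x3, H x3 * q y' y3 = q y' y3 := by
      rw [integral_mul_const, hHone, one_mul]
    have e0 : Rdel φ h q δ y' y3 = ∫ x3, ∫ x', P x' * H x3 * q x' x3 := rfl
    rw [e0, integral_sub hinner_int hHc_int, e1]
  have step2 : ∀ x3, (∫ x', P x' * H x3 * q x' x3) - H x3 * q y' y3
      = ∫ x', P x' * H x3 * (q x' x3 - q y' y3) := by
    intro x3
    have i2 : Integrable (fun x' => P x' * H x3 * q y' y3) :=
      (hPint.mul_const (H x3)).mul_const (q y' y3)
    have e2 : ∫ x', P x' * H x3 * q y' y3 = H x3 * q y' y3 := by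
      rw [show (fun x' => P x' * H x3 * q y' y3)
          = fun x' => P x' * (H x3 * q y' y3) from funext fun _ => by ring,
        integral_mul_const, hPone, one_mul]
    rw [← e2, ← integral_sub (hI1 x3) i2]
    congr 1; funext x'; ring
  have step3 : ∀ x3, |∫ x', P x' * H x3 * (q x' x3 - q y' y3)| ≤ H x3 * B := by
    intro x3
    rw [← Real.norm_eq_abs]
    refine le_trans (norm_integral_le_integral_norm _) ?_
    have hle : ∀ x', ‖P x' * H x3 * (q x' x3 - q y' y3)‖ ≤ P x' * (H x3 * B) := by
      intro x'
      by_cases hd1 : dist x' y' ≤ δ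
      · by_cases hd2 : |x3 - y3| ≤ δ
        · rw [Real.norm_eq_abs, abs_mul, abs_mul, abs_of_nonneg (hPnn x'),
            abs_of_nonneg (hHnn x3), mul_assoc]
          refine mul_le_mul_of_nonneg_left ?_ (hPnn x')
          exact mul_le_mul_of_nonneg_left (hqd x' x3 hd1 hd2) (hHnn x3)
        · have hH0 : H x3 = 0 := hHsupp x3 (lt_of_not_ge hd2)
          simp [hH0]
      · have hP0 : P x' = 0 := hPsupp x' (lt_of_not_ge hd1)
        simp [hP0]
    have h2 : ∫ x', ‖P x' * H x3 * (q x' x3 - q y' y3)‖ ≤ ∫ x', P x' * (H x3 * B) :=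
      integral_mono_of_nonneg (ae_of_all _ fun _ => norm_nonneg _)
        (hPint.mul_const _) (ae_of_all _ hle)
    rw [integral_mul_const, hPone, one_mul] at h2
    exact h2
  rw [step1, ← Real.norm_eq_abs]
  refine le_trans (norm_integral_le_integral_norm _) ?_
  have h3 : ∫ x3, ‖(∫ x', P x' * H x3 * q x' x3) - H x3 * q y' y3‖ ≤ ∫ x3, H x3 * B := by
    refine integral_mono_of_nonneg (ae_of_all _ fun _ => norm_nonneg _)
      (hHint.mul_const _) (ae_of_all _ fun x3 => ?_)
    show ‖(∫ x', P x' * H x3 * q x' x3) - H x3 * q y' y3‖ ≤ H x3 * B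
    rw [Real.norm_eq_abs, step2 x3]
    exact step3 x3
  rw [integral_mul_const, hHone, one_mul] at h3
  exact h3

set_option maxHeartbeats 2000000 in
theorem stmt_0
    (ω : Set (EuclideanSpace ℝ (Fin 2))) (hω_open : IsOpen ω)
    (hω_bdd : Bornology.IsBounded ω)
    (M α : ℝ) (hM : 0 < M) (hα0 : 0 < α) (hα1 : α < 1)
    (φ : EuclideanSpace ℝ (Fin 2) → ℝ) (hφ_smooth : ContDiff ℝ (⊤ : ℕ∞) φ)
    (hφ_supp : Function.support φ ⊆ Metric.closedBall 0 1)
    (hφ_int : ∫ x : EuclideanSpace ℝ (Fin 2), (φ x) ^ 2 = 1)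
    (h : ℝ → ℝ) (hh_smooth : ContDiff ℝ (⊤ : ℕ∞) h)
    (hh_supp : Function.support h ⊆ Set.Icc (-1 : ℝ) 1)
    (hh_int : ∫ x : ℝ, (h x) ^ 2 = 1)
    (qt : EuclideanSpace ℝ (Fin 2) → ℝ → ℝ)
    (hqt_cont : Continuous (fun p : EuclideanSpace ℝ (Fin 2) × ℝ => qt p.1 p.2))
    (hqt_bdd : ∀ x' ∈ closure ω, ∀ x3 : ℝ, |qt x' x3| ≤ 2 * M)
    (hqt_hold : ∀ x' ∈ closure ω, ∀ y' ∈ closure ω, ∀ x3 y3 : ℝ,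
      |qt x' x3 - qt y' y3| ≤
        2 * M * (Real.sqrt (dist x' y' ^ 2 + dist x3 y3 ^ 2)) ^ α)
    (q : EuclideanSpace ℝ (Fin 2) → ℝ → ℝ)
    (hq_eq : ∀ x' ∈ closure ω, ∀ x3 : ℝ, q x' x3 = qt x' x3)
    (hq_zero : ∀ x' ∉ closure ω, ∀ x3 : ℝ, q x' x3 = 0)
    (Cω : ℝ) (hCω : 0 < Cω)
    (hfrontier : ∀ s ∈ Set.Ioc (0 : ℝ) 1,
      volume {x' : EuclideanSpace ℝ (Fin 2) | infDist x' (frontier ω) ≤ s}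
        ≤ ENNReal.ofReal (Cω * s)) :
    ∃ C > 0, ∀ δ ∈ Set.Ioo (0 : ℝ) 1, ∀ y3 : ℝ,
      Real.sqrt (∫ y' : EuclideanSpace ℝ (Fin 2),
          (Rdel φ h q δ y' y3 - q y' y3) ^ 2)
        ≤ C * δ ^ (min α (1 / 2)) := by
  have hφ_cont := hφ_smooth.continuous
  have hh_cont := hh_smooth.continuous
  have hqb : ∀ x' x3, |q x' x3| ≤ 2 * M := by
    intro x' x3
    by_cases hx : x' ∈ closure ω
    · rw [hq_eq x' hx]; exact hqt_bdd x' hx x3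
    · rw [hq_zero x' hx, abs_zero]; positivity
  have hqm : Measurable (fun p : EuclideanSpace ℝ (Fin 2) × ℝ => q p.1 p.2) := by
    have heq : (fun p : EuclideanSpace ℝ (Fin 2) × ℝ => q p.1 p.2)
        = Set.indicator ((closure ω) ×ˢ (Set.univ : Set ℝ)) (fun p => qt p.1 p.2) := by
      funext p
      by_cases hp : p.1 ∈ closure ω
      · rw [hq_eq p.1 hp, Set.indicator_of_mem (Set.mem_prod.2 ⟨hp, Set.mem_univ _⟩)]
      · rw [hq_zero p.1 hp, Set.indicator_of_notMem (fun hmem => hp hmem.1)]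
    rw [heq]
    exact hqt_cont.measurable.indicator
      (isClosed_closure.measurableSet.prod MeasurableSet.univ)
  obtain ⟨R, hR⟩ := hω_bdd.subset_closedBall (0 : EuclideanSpace ℝ (Fin 2))
  have hRcl : closure ω ⊆ closedBall (0 : EuclideanSpace ℝ (Fin 2)) R :=
    closure_minimal hR Metric.isClosed_closedBall
  set BB : Set (EuclideanSpace ℝ (Fin 2)) := closedBall 0 (|R| + 1) with hBBdef
  have hclBB : closure ω ⊆ BB :=
    hRcl.trans (closedBall_subset_closedBall (by linarith [le_abs_self R]))
  have hBBfin : volume BB < ⊤ := measure_closedBall_lt_top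
  have hBBmeas : MeasurableSet BB := measurableSet_closedBall
  set K : ℝ := 16 * M ^ 2 * Cω + 16 * M ^ 2 * (volume BB).toReal with hK
  have hK0 : 0 ≤ K :=
    add_nonneg (by positivity) (mul_nonneg (by positivity) ENNReal.toReal_nonneg)
  refine ⟨Real.sqrt K + 1, by positivity, ?_⟩
  intro δ hδ y3
  obtain ⟨hδ0, hδ1⟩ := hδ
  set m := min α (1 / 2) with hm
  have hm0 : 0 < m := lt_min hα0 (by norm_num)
  have hmhalf : m ≤ 1 / 2 := min_le_right _ _
  have hδm0 : 0 < δ ^ m := Real.rpow_pos_of_pos hδ0 m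
  set bad : Set (EuclideanSpace ℝ (Fin 2)) := {y' | infDist y' (frontier ω) ≤ δ} with hbad
  have hbad_meas : MeasurableSet bad :=
    (isClosed_le (continuous_infDist_pt (frontier ω)) continuous_const).measurableSet
  have hbad_vol : volume bad ≤ ENNReal.ofReal (Cω * δ) := hfrontier δ ⟨hδ0, hδ1.le⟩
  have hind1 : Integrable (Set.indicator bad (fun _ => 16 * M ^ 2)) := by
    rw [integrable_indicator_iff hbad_meas]
    exact integrableOn_const (lt_of_le_of_lt hbad_vol ENNReal.ofReal_lt_top).ne
  have hind2 : Integrable (Set.indicator BB (fun _ => 16 * M ^ 2 * (δ ^ m) ^ 2)) := by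
    rw [integrable_indicator_iff hBBmeas]
    exact integrableOn_const hBBfin.ne
  have hg_int : Integrable (fun y' => Set.indicator bad (fun _ => 16 * M ^ 2) y'
      + Set.indicator BB (fun _ => 16 * M ^ 2 * (δ ^ m) ^ 2) y') := hind1.add hind2
  have hg_val : (∫ y', (Set.indicator bad (fun _ => 16 * M ^ 2) y'
      + Set.indicator BB (fun _ => 16 * M ^ 2 * (δ ^ m) ^ 2) y')) ≤ K * (δ ^ m) ^ 2 := by
    have hδle : δ ≤ (δ ^ m) ^ 2 := by
      have h1 : (δ ^ m) ^ 2 = δ ^ (m * (2:ℕ)) := by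
        rw [Real.rpow_mul hδ0.le, Real.rpow_natCast]
      rw [h1]
      nth_rewrite 1 [← Real.rpow_one δ]
      refine Real.rpow_le_rpow_of_exponent_ge hδ0 hδ1.le ?_
      push_cast; linarith
    have hbadR : (volume bad).toReal ≤ Cω * δ :=
      ENNReal.toReal_le_of_le_ofReal (by positivity) hbad_vol
    rw [integral_add hind1 hind2, integral_indicator_const _ hbad_meas,
      integral_indicator_const _ hBBmeas, smul_eq_mul, smul_eq_mul,
      measureReal_def, measureReal_def]
    have hBBnn : (0:ℝ) ≤ (volume BB).toReal := ENNReal.toReal_nonneg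
    have hbadnn : (0:ℝ) ≤ (volume bad).toReal := ENNReal.toReal_nonneg
    rw [hK]
    have c1 : (volume bad).toReal * (16 * M ^ 2) ≤ 16 * M ^ 2 * Cω * (δ ^ m) ^ 2 := by
      have : (volume bad).toReal ≤ Cω * (δ ^ m) ^ 2 :=
        hbadR.trans (by nlinarith)
      nlinarith
    have c2 : (volume BB).toReal * (16 * M ^ 2 * (δ ^ m) ^ 2)
        = 16 * M ^ 2 * (volume BB).toReal * (δ ^ m) ^ 2 := by ring
    nlinarith
  have habs_sub : ∀ a b : ℝ, |a - b| ≤ |a| + |b| := by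
    intro a b
    calc |a - b| = |a + -b| := by rw [sub_eq_add_neg]
      _ ≤ |a| + |-b| := abs_add_le _ _
      _ = |a| + |b| := by rw [abs_neg]
  have hpt : ∀ y', (Rdel φ h q δ y' y3 - q y' y3) ^ 2
      ≤ Set.indicator bad (fun _ => 16 * M ^ 2) y'
        + Set.indicator BB (fun _ => 16 * M ^ 2 * (δ ^ m) ^ 2) y' := by
    intro y'
    have hgnn1 : 0 ≤ Set.indicator bad (fun _ => 16 * M ^ 2) y' :=
      Set.indicator_nonneg (fun _ _ => by positivity) y'
    have hgnn2 : 0 ≤ Set.indicator BB (fun _ => 16 * M ^ 2 * (δ ^ m) ^ 2) y' :=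
      Set.indicator_nonneg (fun _ _ => by positivity) y'
    by_cases hyb : infDist y' (frontier ω) ≤ δ
    · have h1 : |Rdel φ h q δ y' y3 - q y' y3| ≤ 4 * M := by
        refine key_est φ h q δ y' y3 M (4 * M) hφ_cont hφ_supp hφ_int hh_cont hh_supp
          hh_int hδ0 hqm hqb (by positivity) (fun x' x3 _ _ => ?_)
        have h1 := hqb x' x3
        have h2 := hqb y' y3
        calc |q x' x3 - q y' y3| ≤ |q x' x3| + |q y' y3| := habs_sub _ _
          _ ≤ 4 * M := by linarith
      have h2 : (Rdel φ h q δ y' y3 - q y' y3) ^ 2 ≤ (4 * M) ^ 2 := by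
        rw [← sq_abs]; exact pow_le_pow_left₀ (abs_nonneg _) h1 2
      have hmemb : y' ∈ bad := hyb
      have h3 : Set.indicator bad (fun _ => 16 * M ^ 2) y' = 16 * M ^ 2 :=
        Set.indicator_of_mem hmemb _
      nlinarith
    · push_neg at hyb
      have hynf : y' ∉ frontier ω := by
        intro hf
        have := infDist_zero_of_mem hf
        rw [this] at hyb
        linarith
      have hnotbad : y' ∉ bad := not_le.2 hyb
      have h3 : Set.indicator bad (fun _ => 16 * M ^ 2) y' = 0 :=
        Set.indicator_of_notMem hnotbad _
      by_cases hyω : y' ∈ ω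
      · have hxcl : ∀ x', dist x' y' ≤ δ → x' ∈ closure ω := by
          intro x' hx
          by_contra hxc
          have hxω : x' ∉ ω := fun hh => hxc (subset_closure hh)
          obtain ⟨z, hzf, hzd⟩ := aux_frontier_dist (s := ω) hyω hxω
          have hzle := infDist_le_dist_of_mem (x := y') hzf
          rw [dist_comm x' y'] at hx
          linarith
        have hq4 : ∀ x' x3, dist x' y' ≤ δ → |x3 - y3| ≤ δ →
            |q x' x3 - q y' y3| ≤ 4 * M * δ ^ m := by
          intro x' x3 hd1 hd2
          rw [hq_eq x' (hxcl x' hd1), hq_eq y' (subset_closure hyω)]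
          refine le_trans (hqt_hold x' (hxcl x' hd1) y' (subset_closure hyω) x3 y3) ?_
          have hs1 : Real.sqrt (dist x' y' ^ 2 + dist x3 y3 ^ 2) ≤ 2 * δ := by
            have d3 : dist x3 y3 ≤ δ := by rw [Real.dist_eq]; exact hd2
            have hb : dist x' y' ^ 2 + dist x3 y3 ^ 2 ≤ (2 * δ) ^ 2 := by
              nlinarith [dist_nonneg (x := x') (y := y'), dist_nonneg (x := x3) (y := y3)]
            calc Real.sqrt (dist x' y' ^ 2 + dist x3 y3 ^ 2)
                ≤ Real.sqrt ((2 * δ) ^ 2) := Real.sqrt_le_sqrt hb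
              _ = 2 * δ := Real.sqrt_sq (by linarith)
          have h2 : Real.sqrt (dist x' y' ^ 2 + dist x3 y3 ^ 2) ^ α ≤ (2 * δ) ^ α :=
            Real.rpow_le_rpow (Real.sqrt_nonneg _) hs1 hα0.le
          have h3' : (2 * δ : ℝ) ^ α = 2 ^ α * δ ^ α := Real.mul_rpow (by norm_num) hδ0.le
          have h4 : (2:ℝ) ^ α ≤ 2 := by
            calc (2:ℝ) ^ α ≤ (2:ℝ) ^ (1:ℝ) :=
                Real.rpow_le_rpow_of_exponent_le one_le_two hα1.le
              _ = 2 := Real.rpow_one 2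
          have h5 : δ ^ α ≤ δ ^ m := Real.rpow_le_rpow_of_exponent_ge hδ0 hδ1.le
            (min_le_left _ _)
          have h6 : (0:ℝ) ≤ δ ^ α := (Real.rpow_pos_of_pos hδ0 α).le
          calc 2 * M * Real.sqrt (dist x' y' ^ 2 + dist x3 y3 ^ 2) ^ α
              ≤ 2 * M * ((2:ℝ) ^ α * δ ^ α) := by
                rw [← h3']
                exact mul_le_mul_of_nonneg_left h2 (by linarith)
            _ ≤ 2 * M * (2 * δ ^ m) := by
                refine mul_le_mul_of_nonneg_left ?_ (by linarith)
                calc (2:ℝ) ^ α * δ ^ α ≤ 2 * δ ^ α :=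
                    mul_le_mul_of_nonneg_right h4 h6
                  _ ≤ 2 * δ ^ m := by linarith
            _ = 4 * M * δ ^ m := by ring
        have h1 : |Rdel φ h q δ y' y3 - q y' y3| ≤ 4 * M * δ ^ m :=
          key_est φ h q δ y' y3 M (4 * M * δ ^ m) hφ_cont hφ_supp hφ_int hh_cont hh_supp
            hh_int hδ0 hqm hqb (by positivity) hq4
        have h2 : (Rdel φ h q δ y' y3 - q y' y3) ^ 2 ≤ (4 * M * δ ^ m) ^ 2 := by
          rw [← sq_abs]; exact pow_le_pow_left₀ (abs_nonneg _) h1 2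
        have h4 : Set.indicator BB (fun _ => 16 * M ^ 2 * (δ ^ m) ^ 2) y'
            = 16 * M ^ 2 * (δ ^ m) ^ 2 :=
          Set.indicator_of_mem (hclBB (subset_closure hyω)) _
        rw [h3, h4]
        nlinarith
      · have hycl : y' ∉ closure ω := by
          intro hc
          rcases (closure_eq_self_union_frontier ω ▸ hc) with h' | h'
          exacts [hyω h', hynf h']
        have hq0 : ∀ x' x3, dist x' y' ≤ δ → |x3 - y3| ≤ δ →
            |q x' x3 - q y' y3| ≤ 0 := by
          intro x' x3 hd1 _
          have hx : x' ∉ closure ω := by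
            intro hx
            obtain ⟨z, hzf, hzd⟩ :=
              aux_frontier_dist (s := (closure ω)ᶜ) hycl (not_not_intro hx)
            have hzf' : z ∈ frontier ω := by
              rw [frontier_compl] at hzf
              exact frontier_closure_subset hzf
            have hzle := infDist_le_dist_of_mem (x := y') hzf'
            rw [dist_comm x' y'] at hd1
            linarith
          rw [hq_zero x' hx, hq_zero y' hycl, sub_zero, abs_zero]
        have h1 : |Rdel φ h q δ y' y3 - q y' y3| ≤ 0 :=
          key_est φ h q δ y' y3 M 0 hφ_cont hφ_supp hφ_int hh_cont hh_supp
            hh_int hδ0 hqm hqb le_rfl hq0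
        have h2 : Rdel φ h q δ y' y3 - q y' y3 = 0 :=
          abs_eq_zero.1 (le_antisymm h1 (abs_nonneg _))
        rw [h2]
        nlinarith
  have hfin : (∫ y', (Rdel φ h q δ y' y3 - q y' y3) ^ 2) ≤ K * (δ ^ m) ^ 2 :=
    le_trans (integral_mono_of_nonneg (ae_of_all _ fun y' => sq_nonneg _)
      hg_int (ae_of_all _ hpt)) hg_val
  calc Real.sqrt (∫ y', (Rdel φ h q δ y' y3 - q y' y3) ^ 2)
      ≤ Real.sqrt (K * (δ ^ m) ^ 2) := Real.sqrt_le_sqrt hfin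
    _ = Real.sqrt K * (δ ^ m) := by
        rw [Real.sqrt_mul hK0, Real.sqrt_sq hδm0.le]
    _ ≤ (Real.sqrt K + 1) * δ ^ m := by
        nlinarith [Real.sqrt_nonneg K, hδm0.le]
end

section
/- Let ω ⊆ ℝ² be a bounded open set, M > 0 and 0 < α < 1. Let q : ℝ² × ℝ → ℝ be measurable with |q(x',x₃)| ≤ 2M for all (x',x₃), with q(x',x₃) = 0 whenever x' ∉ cl(ω), and satisfying the uniform Hölder condition in the third variable |q(x',a) − q(x',b)| ≤ 2M·|a − b|^α for all x' ∈ ℝ², a, b ∈ ℝ. Then there exists a constant C > 0, depending only on ω, M, α, φ and h, such that for every δ ∈ (0,1) and every y₃ ∈ ℝ one has (∫_{ℝ²} |R_δ[q](y',y₃) − S_δ[q](y',y₃)|² dy')^{1/2} ≤ C·δ^α. -/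
open MeasureTheory Metric Set

noncomputable def Sdel (φ : EuclideanSpace ℝ (Fin 2) → ℝ)
    (q : EuclideanSpace ℝ (Fin 2) → ℝ → ℝ) (δ : ℝ)
    (y' : EuclideanSpace ℝ (Fin 2)) (y3 : ℝ) : ℝ :=
  ∫ x' : EuclideanSpace ℝ (Fin 2), (Phid φ δ x' y') ^ 2 * q x' y3

theorem stmt_1
    (ω : Set (EuclideanSpace ℝ (Fin 2))) (hω_open : IsOpen ω)
    (hω_bdd : Bornology.IsBounded ω)
    (M α : ℝ) (hM : 0 < M) (hα0 : 0 < α) (hα1 : α < 1)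
    (φ : EuclideanSpace ℝ (Fin 2) → ℝ) (hφ_smooth : ContDiff ℝ (⊤ : ℕ∞) φ)
    (hφ_supp : Function.support φ ⊆ Metric.closedBall 0 1)
    (hφ_int : ∫ x : EuclideanSpace ℝ (Fin 2), (φ x) ^ 2 = 1)
    (h : ℝ → ℝ) (hh_smooth : ContDiff ℝ (⊤ : ℕ∞) h)
    (hh_supp : Function.support h ⊆ Set.Icc (-1 : ℝ) 1)
    (hh_int : ∫ x : ℝ, (h x) ^ 2 = 1)
    (q : EuclideanSpace ℝ (Fin 2) → ℝ → ℝ)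
    (hq_meas : Measurable (fun p : EuclideanSpace ℝ (Fin 2) × ℝ => q p.1 p.2))
    (hq_bdd : ∀ (x' : EuclideanSpace ℝ (Fin 2)) (x3 : ℝ), |q x' x3| ≤ 2 * M)
    (hq_zero : ∀ x' ∉ closure ω, ∀ x3 : ℝ, q x' x3 = 0)
    (hq_hold : ∀ (x' : EuclideanSpace ℝ (Fin 2)) (a b : ℝ),
      |q x' a - q x' b| ≤ 2 * M * |a - b| ^ α) :
    ∃ C > 0, ∀ δ ∈ Set.Ioo (0 : ℝ) 1, ∀ y3 : ℝ,
      Real.sqrt (∫ y' : EuclideanSpace ℝ (Fin 2),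
          (Rdel φ h q δ y' y3 - Sdel φ q δ y' y3) ^ 2)
        ≤ C * δ ^ α := by
  classical
  set K : Set (EuclideanSpace ℝ (Fin 2)) := Metric.cthickening 1 (closure ω) with hK
  have hKbdd : Bornology.IsBounded K := (hω_bdd.closure).cthickening
  have hKmeas : MeasurableSet K := (Metric.isClosed_cthickening).measurableSet
  have hKfin : volume K < ⊤ := hKbdd.measure_lt_top
  set V : ℝ := (volume K).toReal with hV
  have hV0 : 0 ≤ V := ENNReal.toReal_nonneg
  refine ⟨2 * M * (Real.sqrt V + 1), by positivity, ?_⟩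
  intro δ hδ y3
  obtain ⟨hδ0, hδ1⟩ := hδ
  have hδα : (0:ℝ) < δ ^ α := Real.rpow_pos_of_pos hδ0 α
  -- continuity of Phid squared
  have hPhicont : ∀ y', Continuous fun x' => (Phid φ δ x' y') ^ 2 := by
    intro y'
    apply Continuous.pow
    exact continuous_const.mul (hφ_smooth.continuous.comp
      (by fun_prop))
  -- support of Phid squared
  have hPhisupp : ∀ y' x', (Phid φ δ x' y') ^ 2 ≠ 0 → dist x' y' ≤ δ := by
    intro y' x' hne
    have hφne : φ (δ⁻¹ • (x' - y')) ≠ 0 := by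
      intro h0; apply hne; simp [Phid, h0]
    have := hφ_supp (Function.mem_support.2 hφne)
    rw [Metric.mem_closedBall, dist_zero_right, norm_smul] at this
    rw [dist_eq_norm]
    have hδinv : ‖(δ⁻¹ : ℝ)‖ = δ⁻¹ := by
      rw [Real.norm_eq_abs, abs_of_pos (inv_pos.2 hδ0)]
    rw [hδinv] at this
    calc ‖x' - y'‖ = δ * (δ⁻¹ * ‖x' - y'‖) := by field_simp
    _ ≤ δ * 1 := by exact mul_le_mul_of_nonneg_left this hδ0.le
    _ = δ := mul_one δ
  -- integrability of Phid squared
  have hPhiHCS : ∀ y', HasCompactSupport fun x' => (Phid φ δ x' y') ^ 2 := by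
    intro y'
    apply HasCompactSupport.intro (isCompact_closedBall y' δ)
    intro x' hx'
    by_contra hne
    exact hx' (Metric.mem_closedBall.2 (hPhisupp y' x' hne))
  have hPhiInt : ∀ y', Integrable (fun x' => (Phid φ δ x' y') ^ 2) :=
    fun y' => (hPhicont y').integrable_of_hasCompactSupport (hPhiHCS y')
  -- total mass of Phid squared
  have hPhi_int : ∀ y', ∫ x', (Phid φ δ x' y') ^ 2 = 1 := by
    intro y'
    have e1 : ∀ x', (Phid φ δ x' y') ^ 2
        = δ⁻¹ ^ 2 * (fun x => (φ (δ⁻¹ • x)) ^ 2) (x' - y') := by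
      intro x'; simp [Phid, mul_pow]
    calc ∫ x', (Phid φ δ x' y') ^ 2
        = ∫ x', δ⁻¹ ^ 2 * (fun x => (φ (δ⁻¹ • x)) ^ 2) (x' - y') := by
          simp_rw [e1]
      _ = δ⁻¹ ^ 2 * ∫ x', (fun x => (φ (δ⁻¹ • x)) ^ 2) (x' - y') := integral_const_mul _ _
      _ = δ⁻¹ ^ 2 * ∫ x, (φ (δ⁻¹ • x)) ^ 2 := by
          rw [integral_sub_right_eq_self (fun x => (φ (δ⁻¹ • x)) ^ 2) y']
      _ = δ⁻¹ ^ 2 * (|((δ⁻¹) ^ Module.finrank ℝ (EuclideanSpace ℝ (Fin 2)))⁻¹|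
            • ∫ x, (φ x) ^ 2) := by
          rw [Measure.integral_comp_smul volume (fun x => (φ x) ^ 2) δ⁻¹]
      _ = 1 := by
          rw [hφ_int, finrank_euclideanSpace_fin, smul_eq_mul, mul_one, inv_pow, inv_inv,
            abs_of_pos (pow_pos hδ0 2)]
          exact inv_mul_cancel₀ (pow_ne_zero 2 hδ0.ne')
  -- hdel squared facts
  have hcoef : (δ ^ (-(1 / 2) : ℝ)) ^ 2 = δ⁻¹ := by
    rw [← Real.rpow_natCast (δ ^ (-(1 / 2) : ℝ)) 2, ← Real.rpow_mul hδ0.le]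
    norm_num [Real.rpow_neg_one]
  have hhd_cont : Continuous fun x3 => (hdel h δ x3 y3) ^ 2 := by
    apply Continuous.pow
    exact continuous_const.mul (hh_smooth.continuous.comp
      ((continuous_id.sub continuous_const).div_const δ))
  have hhd_supp : ∀ x3, (hdel h δ x3 y3) ^ 2 ≠ 0 → |x3 - y3| ≤ δ := by
    intro x3 hne
    have hne2 : h ((x3 - y3) / δ) ≠ 0 := by
      intro h0; apply hne; simp [hdel, h0]
    have := hh_supp (Function.mem_support.2 hne2)
    rw [Set.mem_Icc, ← abs_le] at this
    rw [abs_div, abs_of_pos hδ0, div_le_one hδ0] at this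
    exact this
  have hhdHCS : HasCompactSupport fun x3 => (hdel h δ x3 y3) ^ 2 := by
    apply HasCompactSupport.intro (isCompact_closedBall y3 δ)
    intro x3 hx'
    by_contra hne
    exact hx' (Metric.mem_closedBall.2 (by rw [Real.dist_eq]; exact hhd_supp x3 hne))
  have hhdInt : Integrable (fun x3 => (hdel h δ x3 y3) ^ 2) :=
    hhd_cont.integrable_of_hasCompactSupport hhdHCS
  have hhd_int : ∫ x3, (hdel h δ x3 y3) ^ 2 = 1 := by
    have e1 : ∀ x3, (hdel h δ x3 y3) ^ 2
        = δ⁻¹ * (fun x => (h (x / δ)) ^ 2) (x3 - y3) := by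
      intro x3; rw [hdel, mul_pow, hcoef]
    calc ∫ x3, (hdel h δ x3 y3) ^ 2
        = ∫ x3, δ⁻¹ * (fun x => (h (x / δ)) ^ 2) (x3 - y3) := by simp_rw [e1]
      _ = δ⁻¹ * ∫ x3, (fun x => (h (x / δ)) ^ 2) (x3 - y3) := integral_const_mul _ _
      _ = δ⁻¹ * ∫ x, (h (x / δ)) ^ 2 := by
          rw [integral_sub_right_eq_self (fun x => (h (x / δ)) ^ 2) y3]
      _ = δ⁻¹ * (|δ| • ∫ x, (h x) ^ 2) := by
          rw [Measure.integral_comp_div (fun x => (h x) ^ 2) δ]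
      _ = 1 := by
          rw [hh_int, smul_eq_mul, mul_one, abs_of_pos hδ0]
          exact inv_mul_cancel₀ hδ0.ne'
  -- measurability of q slices
  have hqmeas' : ∀ x3, Measurable fun x' => q x' x3 := fun x3 =>
    hq_meas.comp (measurable_id.prodMk measurable_const)
  -- key pointwise bound
  have key : ∀ y', |Rdel φ h q δ y' y3 - Sdel φ q δ y' y3| ≤ 2 * M * δ ^ α := by
    intro y'
    set A : ℝ → ℝ := fun x3 => ∫ x', (Phid φ δ x' y') ^ 2 * q x' x3 with hA
    have hAint : ∀ x3, Integrable fun x' => (Phid φ δ x' y') ^ 2 * q x' x3 := by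
      intro x3
      refine Integrable.mono' ((hPhiInt y').mul_const (2 * M))
        (((hPhicont y').aestronglyMeasurable).mul (hqmeas' x3).aestronglyMeasurable)
        (Filter.Eventually.of_forall fun x' => ?_)
      rw [Real.norm_eq_abs, abs_mul, abs_of_nonneg (sq_nonneg _)]
      exact mul_le_mul_of_nonneg_left (hq_bdd x' x3) (sq_nonneg _)
    have hAbd : ∀ a b, |A a - A b| ≤ 2 * M * |a - b| ^ α := by
      intro a b
      rw [hA]
      rw [← integral_sub (hAint a) (hAint b)]
      have e2 : ∀ x', (Phid φ δ x' y') ^ 2 * q x' a - (Phid φ δ x' y') ^ 2 * q x' b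
          = (Phid φ δ x' y') ^ 2 * (q x' a - q x' b) := by intro x'; ring
      simp_rw [e2]
      calc |∫ x', (Phid φ δ x' y') ^ 2 * (q x' a - q x' b)|
          ≤ ∫ x', |(Phid φ δ x' y') ^ 2 * (q x' a - q x' b)| := by
            simpa only [Real.norm_eq_abs] using norm_integral_le_integral_norm (μ := volume)
              (fun x' => (Phid φ δ x' y') ^ 2 * (q x' a - q x' b))
        _ ≤ ∫ x', (Phid φ δ x' y') ^ 2 * (2 * M * |a - b| ^ α) := by
            apply integral_mono
              ((((hAint a).sub (hAint b)).congr (Filter.Eventually.of_forall e2)).abs)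
              ((hPhiInt y').mul_const _)
            intro x'
            dsimp only
            rw [abs_mul, abs_of_nonneg (sq_nonneg _)]
            exact mul_le_mul_of_nonneg_left (hq_hold x' a b) (sq_nonneg _)
        _ = 2 * M * |a - b| ^ α := by
            rw [integral_mul_const, hPhi_int y', one_mul]
    have hAbdd : ∀ x3, |A x3| ≤ 2 * M := by
      intro x3
      rw [hA]
      calc |∫ x', (Phid φ δ x' y') ^ 2 * q x' x3|
          ≤ ∫ x', |(Phid φ δ x' y') ^ 2 * q x' x3| := by
            simpa only [Real.norm_eq_abs] using norm_integral_le_integral_norm (μ := volume)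
              (fun x' => (Phid φ δ x' y') ^ 2 * q x' x3)
        _ ≤ ∫ x', (Phid φ δ x' y') ^ 2 * (2 * M) := by
            apply integral_mono (hAint x3).abs ((hPhiInt y').mul_const _)
            intro x'
            dsimp only
            rw [abs_mul, abs_of_nonneg (sq_nonneg _)]
            exact mul_le_mul_of_nonneg_left (hq_bdd x' x3) (sq_nonneg _)
        _ = 2 * M := by rw [integral_mul_const, hPhi_int y', one_mul]
    have hAmeas : Measurable A := by
      have : StronglyMeasurable fun p : ℝ × EuclideanSpace ℝ (Fin 2) =>
          (Phid φ δ p.2 y') ^ 2 * q p.2 p.1 := by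
        apply Measurable.stronglyMeasurable
        exact ((hPhicont y').measurable.comp measurable_snd).mul
          (hq_meas.comp (measurable_snd.prodMk measurable_fst))
      exact this.integral_prod_right'.measurable
    have hRrw : Rdel φ h q δ y' y3 = ∫ x3, (hdel h δ x3 y3) ^ 2 * A x3 := by
      unfold Rdel
      congr 1
      funext x3
      have e3 : ∀ x', (Phid φ δ x' y') ^ 2 * (hdel h δ x3 y3) ^ 2 * q x' x3
          = (hdel h δ x3 y3) ^ 2 * ((Phid φ δ x' y') ^ 2 * q x' x3) := by intro x'; ring
      simp_rw [e3]
      exact integral_const_mul _ _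
    have hSrw : Sdel φ q δ y' y3 = ∫ x3, (hdel h δ x3 y3) ^ 2 * A y3 := by
      rw [show (fun x3 => (hdel h δ x3 y3) ^ 2 * A y3)
        = fun x3 => ((hdel h δ x3 y3) ^ 2) * A y3 from rfl]
      rw [integral_mul_const, hhd_int, one_mul]
      rfl
    have hInt1 : Integrable fun x3 => (hdel h δ x3 y3) ^ 2 * A x3 := by
      refine Integrable.mono' (hhdInt.mul_const (2 * M))
        ((hhd_cont.aestronglyMeasurable).mul hAmeas.aestronglyMeasurable)
        (Filter.Eventually.of_forall fun x3 => ?_)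
      rw [Real.norm_eq_abs, abs_mul, abs_of_nonneg (sq_nonneg _)]
      exact mul_le_mul_of_nonneg_left (hAbdd x3) (sq_nonneg _)
    have hInt2 : Integrable fun x3 => (hdel h δ x3 y3) ^ 2 * A y3 := hhdInt.mul_const _
    rw [hRrw, hSrw, ← integral_sub hInt1 hInt2]
    have e4 : ∀ x3, (hdel h δ x3 y3) ^ 2 * A x3 - (hdel h δ x3 y3) ^ 2 * A y3
        = (hdel h δ x3 y3) ^ 2 * (A x3 - A y3) := by intro x3; ring
    simp_rw [e4]
    calc |∫ x3, (hdel h δ x3 y3) ^ 2 * (A x3 - A y3)|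
        ≤ ∫ x3, |(hdel h δ x3 y3) ^ 2 * (A x3 - A y3)| := by
          simpa only [Real.norm_eq_abs] using norm_integral_le_integral_norm (μ := volume)
            (fun x3 => (hdel h δ x3 y3) ^ 2 * (A x3 - A y3))
      _ ≤ ∫ x3, (hdel h δ x3 y3) ^ 2 * (2 * M * δ ^ α) := by
          apply integral_mono ((hInt1.sub hInt2).congr (Filter.Eventually.of_forall e4)).abs
            (hhdInt.mul_const _)
          intro x3
          dsimp only
          rw [abs_mul, abs_of_nonneg (sq_nonneg _)]
          by_cases hz : (hdel h δ x3 y3) ^ 2 = 0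
          · rw [hz, zero_mul, zero_mul]
          · have h1 : |x3 - y3| ≤ δ := hhd_supp x3 hz
            have h2 : |x3 - y3| ^ α ≤ δ ^ α :=
              Real.rpow_le_rpow (abs_nonneg _) h1 hα0.le
            refine mul_le_mul_of_nonneg_left ?_ (sq_nonneg _)
            calc |A x3 - A y3| ≤ 2 * M * |x3 - y3| ^ α := hAbd x3 y3
              _ ≤ 2 * M * δ ^ α := by
                  exact mul_le_mul_of_nonneg_left h2 (by positivity)
      _ = 2 * M * δ ^ α := by rw [integral_mul_const, hhd_int, one_mul]
  -- support: the difference vanishes off K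
  have hsupp : ∀ y', y' ∉ K → Rdel φ h q δ y' y3 - Sdel φ q δ y' y3 = 0 := by
    intro y' hy'
    have hz : ∀ x' x3, (Phid φ δ x' y') ^ 2 * q x' x3 = 0 := by
      intro x' x3
      by_cases hp : (Phid φ δ x' y') ^ 2 = 0
      · rw [hp, zero_mul]
      · by_cases hx : x' ∈ closure ω
        · exfalso
          apply hy'
          have hd : dist y' x' ≤ 1 := by
            rw [dist_comm]
            exact (hPhisupp y' x' hp).trans hδ1.le
          exact Metric.mem_cthickening_of_dist_le y' x' 1 (closure ω) hx hd
        · rw [hq_zero x' hx x3, mul_zero]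
    have hR : Rdel φ h q δ y' y3 = 0 := by
      unfold Rdel
      have : ∀ x3, ∫ x', (Phid φ δ x' y') ^ 2 * (hdel h δ x3 y3) ^ 2 * q x' x3 = 0 := by
        intro x3
        have : ∀ x', (Phid φ δ x' y') ^ 2 * (hdel h δ x3 y3) ^ 2 * q x' x3 = 0 := by
          intro x'
          have := hz x' x3
          nlinarith [hz x' x3, sq_nonneg (hdel h δ x3 y3)]
        simp_rw [this]
        exact integral_zero _ _
      simp_rw [this]
      exact integral_zero _ _
    have hS : Sdel φ q δ y' y3 = 0 := by
      unfold Sdel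
      simp_rw [hz]
      exact integral_zero _ _
    rw [hR, hS, sub_zero]
  -- final estimate
  set f : EuclideanSpace ℝ (Fin 2) → ℝ :=
    fun y' => Rdel φ h q δ y' y3 - Sdel φ q δ y' y3 with hf
  have hg_int : Integrable (K.indicator fun _ => (2 * M * δ ^ α) ^ 2) := by
    rw [integrable_indicator_iff hKmeas]
    exact integrableOn_const hKfin.ne
  have hle : ∫ y', (f y') ^ 2 ≤ (2 * M * δ ^ α) ^ 2 * V := by
    have hmono : ∫ y', (f y') ^ 2 ≤ ∫ y', K.indicator (fun _ => (2 * M * δ ^ α) ^ 2) y' := by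
      apply integral_mono_of_nonneg (Filter.Eventually.of_forall fun y' => sq_nonneg _) hg_int
      apply Filter.Eventually.of_forall
      intro y'
      by_cases hy : y' ∈ K
      · rw [Set.indicator_of_mem hy]
        have := key y'
        calc (f y') ^ 2 = |f y'| ^ 2 := (sq_abs _).symm
          _ ≤ (2 * M * δ ^ α) ^ 2 := by
              apply pow_le_pow_left₀ (abs_nonneg _) this
      · rw [Set.indicator_of_notMem hy, hf]
        simp only
        rw [hsupp y' hy]
        norm_num
    rw [integral_indicator_const _ hKmeas] at hmono
    rw [smul_eq_mul] at hmono
    calc ∫ y', (f y') ^ 2 ≤ (volume K).toReal * (2 * M * δ ^ α) ^ 2 := hmono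
      _ = (2 * M * δ ^ α) ^ 2 * V := by rw [hV, mul_comm]
  calc Real.sqrt (∫ y', (f y') ^ 2)
      ≤ Real.sqrt ((2 * M * δ ^ α) ^ 2 * V) := Real.sqrt_le_sqrt hle
    _ = (2 * M * δ ^ α) * Real.sqrt V := by
        rw [Real.sqrt_mul (sq_nonneg _), Real.sqrt_sq (by positivity)]
    _ ≤ 2 * M * (Real.sqrt V + 1) * δ ^ α := by nlinarith [Real.sqrt_nonneg V]
end

section
/- Let ω ⊆ ℝ² be a bounded open set and M > 0. Let q : ℝ² × ℝ → ℝ be measurable with |q(x',x₃)| ≤ 2M for all (x',x₃) and q(x',x₃) = 0 whenever x' ∉ cl(ω). Then there exists a constant C > 0, depending only on ω, M, φ and h, such that for every δ ∈ (0,1) and every y₃ ∈ ℝ the map y' ↦ R_δ[q](y',y₃) is differentiable on ℝ² and (∫_{ℝ²} ‖∇_{y'} R_δ[q](y',y₃)‖² dy')^{1/2} ≤ C·δ^{-1}. -/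
set_option maxHeartbeats 1000000

open MeasureTheory Metric Set

theorem stmt_3
    (ω : Set (EuclideanSpace ℝ (Fin 2))) (hω_open : IsOpen ω)
    (hω_bdd : Bornology.IsBounded ω)
    (M : ℝ) (hM : 0 < M)
    (φ : EuclideanSpace ℝ (Fin 2) → ℝ) (hφ_smooth : ContDiff ℝ (⊤ : ℕ∞) φ)
    (hφ_supp : Function.support φ ⊆ Metric.closedBall 0 1)
    (hφ_int : ∫ x : EuclideanSpace ℝ (Fin 2), (φ x) ^ 2 = 1)
    (h : ℝ → ℝ) (hh_smooth : ContDiff ℝ (⊤ : ℕ∞) h)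
    (hh_supp : Function.support h ⊆ Set.Icc (-1 : ℝ) 1)
    (hh_int : ∫ x : ℝ, (h x) ^ 2 = 1)
    (q : EuclideanSpace ℝ (Fin 2) → ℝ → ℝ)
    (hq_meas : Measurable (fun p : EuclideanSpace ℝ (Fin 2) × ℝ => q p.1 p.2))
    (hq_bdd : ∀ (x' : EuclideanSpace ℝ (Fin 2)) (x3 : ℝ), |q x' x3| ≤ 2 * M)
    (hq_zero : ∀ x' ∉ closure ω, ∀ x3 : ℝ, q x' x3 = 0) :
    ∃ C > 0, ∀ δ ∈ Set.Ioo (0 : ℝ) 1, ∀ y3 : ℝ,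
      Differentiable ℝ (fun y' => Rdel φ h q δ y' y3) ∧
      Real.sqrt (∫ y' : EuclideanSpace ℝ (Fin 2),
          ‖gradient (fun y' => Rdel φ h q δ y' y3) y'‖ ^ 2)
        ≤ C * δ⁻¹ := by
  classical
  have hφc : Continuous φ := hφ_smooth.continuous
  have hhc : Continuous h := hh_smooth.continuous
  have hφ0 : ∀ x ∉ closedBall (0 : EuclideanSpace ℝ (Fin 2)) 1, φ x = 0 := by
    intro x hx; by_contra h0; exact hx (hφ_supp (Function.mem_support.2 h0))
  have hh0 : ∀ u ∉ Icc (-1 : ℝ) 1, h u = 0 := by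
    intro u hu; by_contra h0; exact hu (hh_supp (Function.mem_support.2 h0))
  have hφcs : HasCompactSupport φ :=
    HasCompactSupport.intro (isCompact_closedBall _ _) hφ0
  -- bound for fderiv of φ²
  have hφ2 : ContDiff ℝ (⊤ : ℕ∞) (fun z => φ z ^ 2) := hφ_smooth.pow 2
  have hφ2cs : HasCompactSupport (fun z : EuclideanSpace ℝ (Fin 2) => φ z ^ 2) :=
    HasCompactSupport.intro (isCompact_closedBall
      (0 : EuclideanSpace ℝ (Fin 2)) 1) (fun x hx => by rw [hφ0 x hx]; ring)
  obtain ⟨S, hS⟩ := (hφ2.continuous_fderiv (by simp)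
    ).bounded_above_of_compact_support (hφ2cs.fderiv ℝ)
  have hS0 : 0 ≤ S := le_trans (norm_nonneg _) (hS 0)
  set κ : ℝ := (volume (ball (0 : EuclideanSpace ℝ (Fin 2)) 1)).toReal with hκdef
  have hκ0 : 0 ≤ κ := ENNReal.toReal_nonneg
  have hclK : IsCompact (closure ω) :=
    Metric.isCompact_of_isClosed_isBounded isClosed_closure hω_bdd.closure
  set Ω : Set (EuclideanSpace ℝ (Fin 2)) := cthickening 1 (closure ω) with hΩdef
  have hΩc : IsCompact Ω := hclK.cthickening
  set A : ℝ := (volume Ω).toReal with hAdef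
  have hA0 : 0 ≤ A := ENNReal.toReal_nonneg
  refine ⟨2 * M * S * κ * Real.sqrt A + 1, by positivity, ?_⟩
  rintro δ ⟨hδ0, hδ1⟩ y3
  have hδi : (0 : ℝ) < δ⁻¹ := inv_pos.2 hδ0
  set L : ℝ →L[ℝ] ℝ →L[ℝ] ℝ := ContinuousLinearMap.lsmul ℝ ℝ with hLdef
  set L' := L.precompL (EuclideanSpace ℝ (Fin 2)) with hL'def
  set f : EuclideanSpace ℝ (Fin 2) → ℝ := fun t => δ⁻¹ ^ 2 * φ ((-δ⁻¹) • t) ^ 2 with hfdef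
  set Q : EuclideanSpace ℝ (Fin 2) → ℝ := fun x' => ∫ x3, hdel h δ x3 y3 ^ 2 * q x' x3
    with hQdef
  -- smoothness of f
  have hfsm : ContDiff ℝ (⊤ : ℕ∞) f :=
    contDiff_const.mul ((hφ_smooth.comp (contDiff_id.const_smul (-δ⁻¹))).pow 2)
  have hf1 : ContDiff ℝ 1 f := hfsm.of_le (by exact_mod_cast le_top)
  -- support of f
  have hfz : ∀ t, t ∉ closedBall (0 : EuclideanSpace ℝ (Fin 2)) δ → f t = 0 := by
    intro t ht
    have hnt : δ < ‖t‖ := by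
      simpa [mem_closedBall, dist_zero_right, not_le] using ht
    have : φ ((-δ⁻¹) • t) = 0 := by
      apply hφ0
      simp only [mem_closedBall, dist_zero_right, not_le, norm_smul, norm_neg,
        Real.norm_eq_abs, abs_of_pos hδi]
      calc (1 : ℝ) = δ⁻¹ * δ := by field_simp
      _ < δ⁻¹ * ‖t‖ := by gcongr
    show δ⁻¹ ^ 2 * φ ((-δ⁻¹) • t) ^ 2 = 0
    rw [this]; ring
  have hfcs : HasCompactSupport f :=
    HasCompactSupport.intro (isCompact_closedBall _ _) hfz
  have hfts : tsupport f ⊆ closedBall (0 : EuclideanSpace ℝ (Fin 2)) δ :=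
    closure_minimal (fun x hx => by
      by_contra hc; exact (Function.mem_support.1 hx) (hfz x hc)) isClosed_closedBall
  -- fderiv bound for f
  have hDf : ∀ t, ‖fderiv ℝ f t‖ ≤ δ⁻¹ ^ 3 * S := by
    intro t
    have h1 : HasFDerivAt (fun s : EuclideanSpace ℝ (Fin 2) => (-δ⁻¹) • s)
        ((-δ⁻¹) • ContinuousLinearMap.id ℝ (EuclideanSpace ℝ (Fin 2))) t :=
      (hasFDerivAt_id t).const_smul (-δ⁻¹)
    have h2 : HasFDerivAt (fun z => φ z ^ 2)
        (fderiv ℝ (fun z => φ z ^ 2) ((-δ⁻¹) • t)) ((-δ⁻¹) • t) :=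
      ((hφ2.differentiable (by simp)) _).hasFDerivAt
    have h3 := (h2.comp t h1).const_mul (δ⁻¹ ^ 2)
    have h4 : HasFDerivAt f
        ((δ⁻¹ ^ 2) • ((fderiv ℝ (fun z => φ z ^ 2) ((-δ⁻¹) • t)).comp
          ((-δ⁻¹) • ContinuousLinearMap.id ℝ (EuclideanSpace ℝ (Fin 2))))) t := h3
    rw [h4.fderiv]
    have hcompn : ‖(fderiv ℝ (fun z => φ z ^ 2) ((-δ⁻¹) • t)).comp
        ((-δ⁻¹) • ContinuousLinearMap.id ℝ (EuclideanSpace ℝ (Fin 2)))‖ ≤ S * δ⁻¹ := by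
      refine le_trans (ContinuousLinearMap.opNorm_comp_le _ _) ?_
      have h5 : ‖(-δ⁻¹) • ContinuousLinearMap.id ℝ (EuclideanSpace ℝ (Fin 2))‖ ≤ δ⁻¹ := by
        refine le_trans (ContinuousLinearMap.opNorm_smul_le _ _) ?_
        rw [Real.norm_eq_abs, abs_neg, abs_of_pos hδi]
        calc δ⁻¹ * ‖ContinuousLinearMap.id ℝ (EuclideanSpace ℝ (Fin 2))‖
            ≤ δ⁻¹ * 1 := by gcongr; exact ContinuousLinearMap.norm_id_le
          _ = δ⁻¹ := mul_one _
      exact mul_le_mul (hS _) h5 (norm_nonneg _) hS0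
    calc ‖(δ⁻¹ ^ 2) • ((fderiv ℝ (fun z => φ z ^ 2) ((-δ⁻¹) • t)).comp
          ((-δ⁻¹) • ContinuousLinearMap.id ℝ (EuclideanSpace ℝ (Fin 2))))‖
        ≤ ‖(δ⁻¹ ^ 2 : ℝ)‖ * ‖(fderiv ℝ (fun z => φ z ^ 2) ((-δ⁻¹) • t)).comp
          ((-δ⁻¹) • ContinuousLinearMap.id ℝ (EuclideanSpace ℝ (Fin 2)))‖ :=
            ContinuousLinearMap.opNorm_smul_le _ _
      _ ≤ δ⁻¹ ^ 2 * (S * δ⁻¹) := by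
          rw [Real.norm_eq_abs, abs_of_pos (pow_pos hδi 2)]
          exact mul_le_mul_of_nonneg_left hcompn (by positivity)
      _ = δ⁻¹ ^ 3 * S := by ring
  -- hdel integral
  have hrpos : (0 : ℝ) < δ ^ (-(1 / 2) : ℝ) := Real.rpow_pos_of_pos hδ0 _
  have hrsq : (δ ^ (-(1 / 2) : ℝ)) ^ 2 = δ⁻¹ := by
    rw [← Real.rpow_natCast (δ ^ (-(1 / 2) : ℝ)) 2, ← Real.rpow_mul hδ0.le]
    norm_num [Real.rpow_neg_one]
  have hdel_int : ∫ x3, hdel h δ x3 y3 ^ 2 = 1 := by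
    have e1 : ∀ x3, hdel h δ x3 y3 ^ 2 = δ⁻¹ * (fun u => h (u / δ) ^ 2) (x3 - y3) := by
      intro x3; simp only [hdel, mul_pow, hrsq]
    calc ∫ x3, hdel h δ x3 y3 ^ 2
        = ∫ x3, δ⁻¹ * (fun u => h (u / δ) ^ 2) (x3 - y3) := by simp_rw [e1]
      _ = δ⁻¹ * ∫ x3, (fun u => h (u / δ) ^ 2) (x3 - y3) := integral_const_mul _ _
      _ = δ⁻¹ * ∫ u, h (u / δ) ^ 2 := by
          rw [integral_sub_right_eq_self (fun u => h (u / δ) ^ 2) y3]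
      _ = δ⁻¹ * (|δ| • ∫ u, h u ^ 2) := by
          rw [Measure.integral_comp_div (fun u => h u ^ 2) δ]
      _ = 1 := by rw [hh_int, abs_of_pos hδ0, smul_eq_mul, mul_one]; field_simp
  -- measurability of Q
  have hhdelc : Continuous (fun x3 => hdel h δ x3 y3) := by
    unfold hdel
    exact continuous_const.mul (hhc.comp ((continuous_id.sub continuous_const).div_const δ))
  have hQm : AEStronglyMeasurable Q volume := by
    have hm : StronglyMeasurable (fun p : EuclideanSpace ℝ (Fin 2) × ℝ =>
        hdel h δ p.2 y3 ^ 2 * q p.1 p.2) := by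
      apply Measurable.stronglyMeasurable
      exact (((hhdelc.comp continuous_snd).pow 2).measurable).mul hq_meas
    exact hm.integral_prod_right'.aestronglyMeasurable
  -- boundedness of Q
  have hdelsq_cs : HasCompactSupport (fun x3 => hdel h δ x3 y3 ^ 2) := by
    apply HasCompactSupport.intro (isCompact_Icc (a := y3 - 1) (b := y3 + 1))
    intro x3 hx3
    have habs : 1 < |x3 - y3| := by
      by_contra hle
      push_neg at hle
      have h2 := abs_le.1 hle
      exact hx3 (mem_Icc.2 ⟨by linarith [h2.1], by linarith [h2.2]⟩)
    have hz : h ((x3 - y3) / δ) = 0 := by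
      apply hh0
      intro hmem
      have h1 : |(x3 - y3) / δ| ≤ 1 := abs_le.2 ⟨hmem.1, hmem.2⟩
      rw [abs_div, abs_of_pos hδ0, div_le_one hδ0] at h1
      linarith
    simp [hdel, hz]
  have hdelsq_int : Integrable (fun x3 => hdel h δ x3 y3 ^ 2) :=
    ((hhdelc.pow 2).integrable_of_hasCompactSupport hdelsq_cs)
  have hQb : ∀ x', |Q x'| ≤ 2 * M := by
    intro x'
    have h1 : ‖Q x'‖ ≤ ∫ x3, ‖hdel h δ x3 y3 ^ 2 * q x' x3‖ :=
      norm_integral_le_integral_norm _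
    have h2 : (∫ x3, ‖hdel h δ x3 y3 ^ 2 * q x' x3‖)
        ≤ ∫ x3, (2 * M) * hdel h δ x3 y3 ^ 2 := by
      refine integral_mono_of_nonneg (ae_of_all _ fun x3 => norm_nonneg _)
        (hdelsq_int.const_mul _) (ae_of_all _ fun x3 => ?_)
      show ‖hdel h δ x3 y3 ^ 2 * q x' x3‖ ≤ 2 * M * hdel h δ x3 y3 ^ 2
      have heq : ‖hdel h δ x3 y3 ^ 2 * q x' x3‖ = hdel h δ x3 y3 ^ 2 * |q x' x3| := by
        rw [norm_mul, Real.norm_eq_abs, Real.norm_eq_abs, abs_of_nonneg (sq_nonneg _)]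
      rw [heq, mul_comm (2 * M) _]
      exact mul_le_mul_of_nonneg_left (hq_bdd x' x3) (sq_nonneg _)
    rw [integral_const_mul, hdel_int, mul_one] at h2
    calc |Q x'| = ‖Q x'‖ := (Real.norm_eq_abs _).symm
      _ ≤ _ := h1.trans h2
  have hQ0 : ∀ x' ∉ closure ω, Q x' = 0 := by
    intro x' hx'
    simp only [hQdef, hq_zero x' hx', mul_zero, integral_zero]
  have hQint : Integrable Q := by
    refine Integrable.mono' ((integrable_indicator_iff hclK.isClosed.measurableSet).2
      (integrableOn_const (C := (2*M : ℝ)) hclK.measure_lt_top.ne)) hQm (ae_of_all _ fun x' => ?_)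
    by_cases hx : x' ∈ closure ω
    · rw [indicator_of_mem hx, Real.norm_eq_abs]; exact hQb x'
    · rw [indicator_of_notMem hx, hQ0 x' hx]; simp
  have hQloc : LocallyIntegrable Q := hQint.locallyIntegrable
  -- the convolution identity
  have hPhic : ∀ y', Continuous (fun x' => Phid φ δ x' y') := by
    intro y'
    unfold Phid
    exact continuous_const.mul (hφc.comp ((continuous_id.sub continuous_const).const_smul δ⁻¹))
  obtain ⟨Cφ, hCφ⟩ := hφc.bounded_above_of_compact_support hφcs
  obtain ⟨Ch, hCh⟩ := hhc.bounded_above_of_compact_support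
    (HasCompactSupport.intro isCompact_Icc hh0)
  have hCφ0 : 0 ≤ Cφ := le_trans (norm_nonneg _) (hCφ 0)
  have hCh0 : 0 ≤ Ch := le_trans (norm_nonneg _) (hCh 0)
  have hconv : ∀ y', Rdel φ h q δ y' y3 = convolution f Q L volume y' := by
    intro y'
    have hKm : MeasurableSet (Icc (y3 - δ) (y3 + δ) ×ˢ closedBall y' δ) :=
      measurableSet_Icc.prod measurableSet_closedBall
    have hKfin : (volume.prod volume) (Icc (y3 - δ) (y3 + δ) ×ˢ closedBall y' δ) < ⊤ := by
      rw [Measure.prod_prod]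
      exact ENNReal.mul_lt_top isCompact_Icc.measure_lt_top
        (measure_closedBall_lt_top)
    set B : ℝ := (δ⁻¹ * Cφ) ^ 2 * (δ ^ (-(1 / 2) : ℝ) * Ch) ^ 2 * (2 * M) with hBdef
    have hbound : ∀ p : ℝ × EuclideanSpace ℝ (Fin 2),
        ‖Phid φ δ p.2 y' ^ 2 * hdel h δ p.1 y3 ^ 2 * q p.2 p.1‖
          ≤ (Icc (y3 - δ) (y3 + δ) ×ˢ closedBall y' δ).indicator (fun _ => B) p := by
      rintro ⟨x3, x'⟩
      by_cases hp : (x3, x') ∈ Icc (y3 - δ) (y3 + δ) ×ˢ closedBall y' δ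
      · rw [indicator_of_mem hp]
        have b1 : |Phid φ δ x' y'| ≤ δ⁻¹ * Cφ := by
          rw [Phid, abs_mul, abs_of_pos hδi]
          exact mul_le_mul_of_nonneg_left ((Real.norm_eq_abs _) ▸ hCφ _) hδi.le
        have b2 : |hdel h δ x3 y3| ≤ δ ^ (-(1 / 2) : ℝ) * Ch := by
          rw [hdel, abs_mul, abs_of_pos hrpos]
          exact mul_le_mul_of_nonneg_left ((Real.norm_eq_abs _) ▸ hCh _) hrpos.le
        rw [Real.norm_eq_abs, abs_mul, abs_mul, abs_pow, abs_pow, hBdef]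
        exact mul_le_mul (mul_le_mul (pow_le_pow_left₀ (abs_nonneg _) b1 2)
          (pow_le_pow_left₀ (abs_nonneg _) b2 2) (by positivity) (by positivity))
          (hq_bdd _ _) (abs_nonneg _) (by positivity)
      · rw [indicator_of_notMem hp]
        rw [mem_prod, not_and_or] at hp
        rcases hp with hp | hp
        · have habs : δ < |x3 - y3| := by
            by_contra hle
            push_neg at hle
            have h2 := abs_le.1 hle
            exact hp (mem_Icc.2 ⟨by linarith [h2.1], by linarith [h2.2]⟩)
          have hz : h ((x3 - y3) / δ) = 0 := by
            apply hh0
            intro hmem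
            have h1 : |(x3 - y3) / δ| ≤ 1 := abs_le.2 ⟨hmem.1, hmem.2⟩
            rw [abs_div, abs_of_pos hδ0, div_le_one hδ0] at h1
            linarith
          simp [hdel, hz]
        · have hnt : δ < ‖x' - y'‖ := by
            simpa [mem_closedBall, dist_eq_norm, not_le] using hp
          have hz : φ (δ⁻¹ • (x' - y')) = 0 := by
            apply hφ0
            simp only [mem_closedBall, dist_zero_right, not_le, norm_smul,
              Real.norm_eq_abs, abs_of_pos hδi]
            calc (1 : ℝ) = δ⁻¹ * δ := by field_simp
            _ < δ⁻¹ * ‖x' - y'‖ := by gcongr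
          simp [Phid, hz]
    have hint : Integrable (Function.uncurry (fun x3 (x' : EuclideanSpace ℝ (Fin 2)) =>
        Phid φ δ x' y' ^ 2 * hdel h δ x3 y3 ^ 2 * q x' x3)) (volume.prod volume) := by
      have haesm : AEStronglyMeasurable (Function.uncurry (fun x3
          (x' : EuclideanSpace ℝ (Fin 2)) =>
          Phid φ δ x' y' ^ 2 * hdel h δ x3 y3 ^ 2 * q x' x3)) (volume.prod volume) := by
        apply Measurable.aestronglyMeasurable
        have : Function.uncurry (fun x3 (x' : EuclideanSpace ℝ (Fin 2)) =>
            Phid φ δ x' y' ^ 2 * hdel h δ x3 y3 ^ 2 * q x' x3)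
            = fun p : ℝ × EuclideanSpace ℝ (Fin 2) =>
              Phid φ δ p.2 y' ^ 2 * hdel h δ p.1 y3 ^ 2 * q p.2 p.1 := rfl
        rw [this]
        exact (((((hPhic y').comp continuous_snd).pow 2).measurable).mul
          (((hhdelc.comp continuous_fst).pow 2).measurable)).mul
          (hq_meas.comp (measurable_snd.prodMk measurable_fst))
      refine Integrable.mono' ((integrable_indicator_iff hKm).2
        (integrableOn_const (C := B) hKfin.ne)) haesm (ae_of_all _ fun p => hbound p)
    rw [Rdel, integral_integral_swap hint]
    have e2 : ∀ x' : EuclideanSpace ℝ (Fin 2),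
        (∫ x3, Phid φ δ x' y' ^ 2 * hdel h δ x3 y3 ^ 2 * q x' x3)
          = f (y' - x') * Q x' := by
      intro x'
      have : (∫ x3, Phid φ δ x' y' ^ 2 * hdel h δ x3 y3 ^ 2 * q x' x3)
          = Phid φ δ x' y' ^ 2 * ∫ x3, hdel h δ x3 y3 ^ 2 * q x' x3 := by
        rw [← integral_const_mul]
        congr 1 with x3
        ring
      rw [this]
      congr 1
      have harg : (-δ⁻¹) • (y' - x') = δ⁻¹ • (x' - y') := by
        rw [neg_smul, ← smul_neg, neg_sub]
      simp only [hfdef, Phid, mul_pow, harg]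
    simp_rw [e2]
    rw [convolution_def]
    simp only [hLdef, ContinuousLinearMap.lsmul_apply, smul_eq_mul]
    have := integral_sub_left_eq_self (fun t => f t * Q (y' - t)) volume y'
    simp only [sub_sub_cancel] at this
    exact this
  have hDsupp : ∀ t, fderiv ℝ f t ≠ 0 → ‖t‖ ≤ δ := by
    intro t h0
    have ht : t ∈ tsupport f := support_fderiv_subset ℝ (Function.mem_support.2 h0)
    simpa [mem_closedBall, dist_zero_right] using hfts ht
  have hfun : (fun y' => Rdel φ h q δ y' y3) = convolution f Q L volume := funext hconv
  have hder : ∀ y, HasFDerivAt (convolution f Q L volume)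
      (convolution (fderiv ℝ f) Q L' volume y) y := fun y =>
    hfcs.hasFDerivAt_convolution_left L hf1 hQloc y
  constructor
  · rw [hfun]
    exact fun y => (hder y).differentiableAt
  · rw [hfun]
    have hgrad : ∀ y, ‖gradient (convolution f Q L volume) y‖
        = ‖convolution (fderiv ℝ f) Q L' volume y‖ := by
      intro y
      rw [gradient, LinearIsometryEquiv.norm_map, (hder y).fderiv]
    letI i1 : NormedAddCommGroup (EuclideanSpace ℝ (Fin 2) →L[ℝ] ℝ) := ContinuousLinearMap.toNormedAddCommGroup
    letI i2 : NormedSpace ℝ (EuclideanSpace ℝ (Fin 2) →L[ℝ] ℝ) := ContinuousLinearMap.toNormedSpace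
    letI i3 : NormedAddCommGroup (ℝ →L[ℝ] EuclideanSpace ℝ (Fin 2) →L[ℝ] ℝ) := ContinuousLinearMap.toNormedAddCommGroup
    letI i4 : NormedSpace ℝ (ℝ →L[ℝ] EuclideanSpace ℝ (Fin 2) →L[ℝ] ℝ) := ContinuousLinearMap.toNormedSpace
    have hL'n : ‖L'‖ ≤ 1 := le_trans (L.norm_precompL_le _) ContinuousLinearMap.opNorm_lsmul_le
    have hptw : ∀ y, ‖convolution (fderiv ℝ f) Q L' volume y‖ ≤ 2 * M * S * κ * δ⁻¹ := by
      intro y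
      rw [convolution_def]
      refine le_trans (norm_integral_le_integral_norm _) ?_
      have hptb : ∀ t, ‖L' (fderiv ℝ f t) (Q (y - t))‖
          ≤ (closedBall (0 : EuclideanSpace ℝ (Fin 2)) δ).indicator
            (fun _ => δ⁻¹ ^ 3 * S * (2 * M)) t := by
        intro t
        by_cases ht : t ∈ closedBall (0 : EuclideanSpace ℝ (Fin 2)) δ
        · rw [indicator_of_mem ht]
          calc ‖L' (fderiv ℝ f t) (Q (y - t))‖
              ≤ ‖L'‖ * ‖fderiv ℝ f t‖ * ‖Q (y - t)‖ := ContinuousLinearMap.le_opNorm₂ _ _ _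
            _ ≤ 1 * (δ⁻¹ ^ 3 * S) * (2 * M) := by
                refine mul_le_mul (mul_le_mul hL'n (hDf t) (norm_nonneg _) zero_le_one)
                  ?_ (norm_nonneg _) (by positivity)
                rw [Real.norm_eq_abs]; exact hQb _
            _ = δ⁻¹ ^ 3 * S * (2 * M) := by ring
        · rw [indicator_of_notMem ht]
          by_cases hft : fderiv ℝ f t = 0
          · simp [hft]
          · exact absurd (by simpa [mem_closedBall, dist_zero_right] using hDsupp t hft) ht
      refine le_trans (integral_mono_of_nonneg (ae_of_all _ fun t => norm_nonneg _)
        ((integrable_indicator_iff measurableSet_closedBall).2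
          (integrableOn_const (C := δ⁻¹ ^ 3 * S * (2 * M)) measure_closedBall_lt_top.ne))
        (ae_of_all _ hptb)) ?_
      rw [integral_indicator_const _ measurableSet_closedBall, measureReal_def]
      rw [Measure.addHaar_closedBall _ _ hδ0.le]
      rw [ENNReal.toReal_mul, ENNReal.toReal_ofReal (by positivity)]
      simp only [finrank_euclideanSpace, Fintype.card_fin, smul_eq_mul, ← hκdef]
      have heq : δ ^ 2 * κ * (δ⁻¹ ^ 3 * S * (2 * M)) = 2 * M * S * κ * δ⁻¹ := by
        field_simp
      rw [heq]
    have hgz : ∀ y ∉ Ω, convolution (fderiv ℝ f) Q L' volume y = 0 := by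
      intro y hy
      rw [convolution_def]
      have hz : ∀ t, L' (fderiv ℝ f t) (Q (y - t)) = 0 := by
        intro t
        by_cases hft : fderiv ℝ f t = 0
        · simp [hft]
        · have ht' : ‖t‖ ≤ δ := hDsupp t hft
          have hQz : Q (y - t) = 0 := by
            apply hQ0
            intro hmem
            refine hy (mem_cthickening_of_dist_le y (y - t) 1 _ hmem ?_)
            rw [dist_eq_norm, sub_sub_cancel]
            linarith
          simp [hQz]
      simp only [hz, integral_zero]
    have hb2 : ∀ y, ‖gradient (convolution f Q L volume) y‖ ^ 2
        ≤ Ω.indicator (fun _ => (2 * M * S * κ * δ⁻¹) ^ 2) y := by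
      intro y
      by_cases hy : y ∈ Ω
      · rw [indicator_of_mem hy, hgrad y]
        exact pow_le_pow_left₀ (norm_nonneg _) (hptw y) 2
      · rw [indicator_of_notMem hy, hgrad y, hgz y hy]
        simp
    have hint2 : (∫ y, ‖gradient (convolution f Q L volume) y‖ ^ 2)
        ≤ A * (2 * M * S * κ * δ⁻¹) ^ 2 := by
      refine le_trans (integral_mono_of_nonneg (ae_of_all _ fun y => by positivity)
        ((integrable_indicator_iff isClosed_cthickening.measurableSet).2
          (integrableOn_const (C := (2 * M * S * κ * δ⁻¹) ^ 2) hΩc.measure_lt_top.ne)) (ae_of_all _ hb2)) ?_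
      rw [integral_indicator_const _ isClosed_cthickening.measurableSet]
      rw [smul_eq_mul, measureReal_def]
    calc Real.sqrt (∫ y, ‖gradient (convolution f Q L volume) y‖ ^ 2)
        ≤ Real.sqrt (A * (2 * M * S * κ * δ⁻¹) ^ 2) := Real.sqrt_le_sqrt hint2
      _ = Real.sqrt A * (2 * M * S * κ * δ⁻¹) := by
          rw [Real.sqrt_mul hA0, Real.sqrt_sq (by positivity)]
      _ = (2 * M * S * κ * Real.sqrt A) * δ⁻¹ := by ring
      _ ≤ (2 * M * S * κ * Real.sqrt A + 1) * δ⁻¹ := by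
          nlinarith [hδi.le]
end

section
/- Let 0 < α < 1 and H > 0. There exists a constant C > 0 depending only on α such that the following holds: if f : ℝ² → ℝ is continuous, square-integrable on ℝ², and satisfies |f(x) − f(y)| ≤ H·‖x − y‖^α for all x, y ∈ ℝ², then for every x ∈ ℝ² one has |f(x)| ≤ C·H^{1/(α+1)}·(∫_{ℝ²} f² )^{α/(2(α+1))}; equivalently, sup_{x∈ℝ²}|f(x)| ≤ C·H^{1−μ}·‖f‖_{L²(ℝ²)}^{μ} with μ = 2α/(2α+2). -/
open MeasureTheory Metric Set

theorem stmt_7 (α : ℝ) (hα0 : 0 < α) (hα1 : α < 1) :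
    ∃ C > 0, ∀ H > (0 : ℝ), ∀ f : EuclideanSpace ℝ (Fin 2) → ℝ,
      Continuous f →
      Integrable (fun x => f x ^ 2) →
      (∀ x y : EuclideanSpace ℝ (Fin 2), |f x - f y| ≤ H * ‖x - y‖ ^ α) →
      ∀ x : EuclideanSpace ℝ (Fin 2),
        |f x| ≤ C * H ^ ((1 : ℝ) / (α + 1)) *
          (∫ y : EuclideanSpace ℝ (Fin 2), f y ^ 2) ^ (α / (2 * (α + 1))) := by
  have hα1' : α + 1 ≠ 0 := by positivity
  set V := (volume (ball (0 : EuclideanSpace ℝ (Fin 2)) 1)).toReal with hVdef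
  have hV : 0 < V := by
    apply ENNReal.toReal_pos
    · exact (measure_ball_pos _ _ one_pos).ne'
    · exact measure_ball_lt_top.ne
  set K := 4 * 2 ^ ((2:ℝ)/α) / V with hKdef
  have hK : 0 < K := by positivity
  set e := α / (2 * (α + 1)) with hedef
  have he : 0 < e := by positivity
  refine ⟨K ^ e, Real.rpow_pos_of_pos hK e, ?_⟩
  intro H hH f hf hInt hHol x
  have hI0 : 0 ≤ ∫ y : EuclideanSpace ℝ (Fin 2), f y ^ 2 :=
    integral_nonneg fun y => sq_nonneg _
  set I := ∫ y : EuclideanSpace ℝ (Fin 2), f y ^ 2 with hIdef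
  set M := |f x| with hMdef
  rcases eq_or_lt_of_le (abs_nonneg (f x)) with hM | hM
  · rw [show M = 0 from hM.symm]
    exact mul_nonneg (mul_nonneg (Real.rpow_nonneg hK.le _) (Real.rpow_nonneg hH.le _))
      (Real.rpow_nonneg hI0 _)
  set r := (M / (2*H)) ^ ((1:ℝ)/α) with hrdef
  have hMH : 0 < M / (2*H) := by positivity
  have hr : 0 < r := Real.rpow_pos_of_pos hMH _
  have hra : r ^ α = M / (2*H) := by
    rw [hrdef, ← Real.rpow_mul hMH.le, one_div_mul_cancel hα0.ne', Real.rpow_one]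
  have hball : ∀ y ∈ ball x r, (M/2)^2 ≤ f y ^ 2 := by
    intro y hy
    have h1 : ‖x - y‖ ^ α ≤ r ^ α := by
      apply Real.rpow_le_rpow (norm_nonneg _) _ hα0.le
      have := mem_ball'.1 hy
      rw [dist_eq_norm] at this
      exact this.le
    have h2 : |f x - f y| ≤ M / 2 := by
      calc |f x - f y| ≤ H * ‖x - y‖ ^ α := hHol x y
        _ ≤ H * (r ^ α) := by nlinarith
        _ = M / 2 := by rw [hra]; field_simp
    have h3 : M / 2 ≤ |f y| := by
      have := abs_sub_abs_le_abs_sub (f x) (f y)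
      rw [← hMdef] at this
      linarith
    have h4 : (M/2)^2 ≤ |f y|^2 := by
      apply pow_le_pow_left₀ (by positivity) h3
    rwa [sq_abs] at h4
  have hIntOn : IntegrableOn (fun y => f y ^ 2) (ball x r) := hInt.integrableOn
  have h3 : (M/2)^2 * (volume (ball x r)).toReal ≤ ∫ y in ball x r, f y ^ 2 :=
    setIntegral_ge_of_const_le_real measurableSet_ball measure_ball_lt_top.ne hball hIntOn
  have h4 : (∫ y in ball x r, f y ^ 2) ≤ I :=
    setIntegral_le_integral hInt (Filter.Eventually.of_forall fun y => sq_nonneg _)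
  have h5 : (volume (ball x r)).toReal = r ^ 2 * V := by
    rw [Measure.addHaar_ball volume x hr.le, ENNReal.toReal_mul,
      ENNReal.toReal_ofReal (by positivity), finrank_euclideanSpace_fin]
  have h7 : r ^ 2 = (M/(2*H)) ^ ((2:ℝ)/α) := by
    rw [hrdef, ← Real.rpow_natCast ((M / (2*H)) ^ ((1:ℝ)/α)) 2, ← Real.rpow_mul hMH.le]
    norm_num
    congr 1
    ring
  have hsplit : (M/(2*H)) ^ ((2:ℝ)/α)
      = M ^ ((2:ℝ)/α) / ((2:ℝ)^((2:ℝ)/α) * H ^ ((2:ℝ)/α)) := by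
    rw [Real.div_rpow hM.le (by positivity), Real.mul_rpow (by norm_num) hH.le]
  have h6 : M^2/4 * (M ^ ((2:ℝ)/α) / ((2:ℝ)^((2:ℝ)/α) * H ^ ((2:ℝ)/α)) * V) ≤ I := by
    calc M^2/4 * (M ^ ((2:ℝ)/α) / ((2:ℝ)^((2:ℝ)/α) * H ^ ((2:ℝ)/α)) * V)
        = (M/2)^2 * (volume (ball x r)).toReal := by
          rw [h5, h7, hsplit]; ring
      _ ≤ ∫ y in ball x r, f y ^ 2 := h3
      _ ≤ I := h4
  have hb : (0:ℝ) < H ^ ((2:ℝ)/α) := Real.rpow_pos_of_pos hH _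
  have hc : (0:ℝ) < (2:ℝ) ^ ((2:ℝ)/α) := Real.rpow_pos_of_pos two_pos _
  have h8 : M ^ (2*(α+1)/α) ≤ K * H ^ ((2:ℝ)/α) * I := by
    have hd : 2*(α+1)/α = (2:ℝ) + 2/α := by field_simp
    rw [hd, Real.rpow_add hM, Real.rpow_two]
    calc M^2 * M ^ ((2:ℝ)/α)
        = (4 * (2:ℝ)^((2:ℝ)/α) * H ^ ((2:ℝ)/α) / V) *
          (M^2/4 * (M ^ ((2:ℝ)/α) / ((2:ℝ)^((2:ℝ)/α) * H ^ ((2:ℝ)/α)) * V)) := by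
          field_simp
      _ ≤ (4 * (2:ℝ)^((2:ℝ)/α) * H ^ ((2:ℝ)/α) / V) * I := by
          apply mul_le_mul_of_nonneg_left h6 (by positivity)
      _ = K * H ^ ((2:ℝ)/α) * I := by rw [hKdef]; ring
  have hpe : 2*(α+1)/α * e = 1 := by rw [hedef]; field_simp
  have hfe : (2:ℝ)/α * e = 1/(α+1) := by rw [hedef]; field_simp
  calc M = (M ^ (2*(α+1)/α)) ^ e := by
        rw [← Real.rpow_mul hM.le, hpe, Real.rpow_one]
    _ ≤ (K * H ^ ((2:ℝ)/α) * I) ^ e :=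
        Real.rpow_le_rpow (by positivity) h8 he.le
    _ = K ^ e * H ^ ((1:ℝ)/(α+1)) * I ^ e := by
        rw [Real.mul_rpow (by positivity) hI0, Real.mul_rpow hK.le hb.le,
          ← Real.rpow_mul hH.le, hfe]
end
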